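/- In the minimal configuration, the transversal t cannot be a supporting line for exactly one of the sets with all other sets meeting t in their interiors: if t supports H_{Sₖ,c_m}(Pₖ) and intersects the interior of every other H_{Sᵢ,c_m}(Pᵢ), i ≠ k, then there exists c̃ < c_m and a line t̃ (a translate of t) that is a transversal of {H_{Sᵢ,c̃}(Pᵢ)}, contradicting minimality of c_m. Hence at least two sets are supported by t. -/

import Mathlib

def homothetyImage (S : EuclideanSpace ℝ (Fin 2)) (c : ℝ)
    (P : Set (EuclideanSpace ℝ (Fin 2))) : Set (EuclideanSpace ℝ (Fin 2)) :=
  (fun X => S + c • (X - S)) '' P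

def IsLine (L : Set (EuclideanSpace ℝ (Fin 2))) : Prop :=
  ∃ (f : EuclideanSpace ℝ (Fin 2) →L[ℝ] ℝ) (a : ℝ), f ≠ 0 ∧ L = {x | f x = a}

lemma convex_homothetyImage (S : EuclideanSpace ℝ (Fin 2)) (c : ℝ)
    {P : Set (EuclideanSpace ℝ (Fin 2))} (hP : Convex ℝ P) :
    Convex ℝ (homothetyImage S c P) := by
  rintro x ⟨u, hu, rfl⟩ y ⟨v, hv, rfl⟩ a b ha hb hab
  refine ⟨a • u + b • v, hP hu hv ha hb hab, ?_⟩
  have hb' : b = 1 - a := by linarith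
  subst hb'
  module

lemma mem_interior_homothetyImage {S : EuclideanSpace ℝ (Fin 2)} {c : ℝ} (hc : 0 < c)
    {P : Set (EuclideanSpace ℝ (Fin 2))} (hS : S ∈ interior P) :
    S ∈ interior (homothetyImage S c P) := by
  have hg : Continuous (fun y : EuclideanSpace ℝ (Fin 2) => S + c⁻¹ • (y - S)) :=
    by fun_prop
  have hset : (fun y : EuclideanSpace ℝ (Fin 2) => S + c⁻¹ • (y - S)) ⁻¹' (interior P)
      ⊆ homothetyImage S c P := by
    intro y hy
    refine ⟨S + c⁻¹ • (y - S), interior_subset hy, ?_⟩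
    show S + c • (S + c⁻¹ • (y - S) - S) = y
    have h1 : c • (S + c⁻¹ • (y - S) - S) = y - S := by
      rw [add_sub_cancel_left, smul_smul, mul_inv_cancel₀ hc.ne', one_smul]
    rw [h1, add_sub_cancel]
  have hopen : IsOpen ((fun y : EuclideanSpace ℝ (Fin 2) => S + c⁻¹ • (y - S)) ⁻¹' interior P) :=
    isOpen_interior.preimage hg
  have hmem : S ∈ (fun y : EuclideanSpace ℝ (Fin 2) => S + c⁻¹ • (y - S)) ⁻¹' interior P := by
    simpa using hS
  exact interior_maximal hset hopen hmem

/-- If the transversal `t` supports exactly one of the expanded sets (index `k`)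
and meets the interiors of all the others, then a translate of `t` is a
transversal for some strictly smaller ratio; hence such a configuration cannot
be minimal. -/
theorem one_touching_set_not_minimal {m : ℕ}
    (P : Fin m → Set (EuclideanSpace ℝ (Fin 2)))
    (S : Fin m → EuclideanSpace ℝ (Fin 2))
    (hcpt : ∀ i, IsCompact (P i)) (hconv : ∀ i, Convex ℝ (P i))
    (hS : ∀ i, S i ∈ interior (P i))
    (cm : ℝ) (hcm : 1 < cm)
    (t : Set (EuclideanSpace ℝ (Fin 2))) (ht : IsLine t)
    -- `t` is a transversal of the family at ratio `cm`:
    (htr : ∀ i, (t ∩ homothetyImage (S i) cm (P i)).Nonempty)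
    (k : Fin m)
    -- `t` supports the `k`-th set:
    (hk : t ∩ interior (homothetyImage (S k) cm (P k)) = ∅)
    -- `t` meets the interior of every other set:
    (hother : ∀ i, i ≠ k →
      (t ∩ interior (homothetyImage (S i) cm (P i))).Nonempty) :
    ∃ c' : ℝ, 0 < c' ∧ c' < cm ∧ ∃ w : EuclideanSpace ℝ (Fin 2),
      ∀ i, (((fun x => x + w) '' t) ∩ homothetyImage (S i) c' (P i)).Nonempty := by
  classical
  have hcm0 : (0:ℝ) < cm := lt_trans one_pos hcm
  obtain ⟨p, hpt, hpH⟩ := htr k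
  set v : EuclideanSpace ℝ (Fin 2) := S k - p with hv
  have hSkInt : S k ∈ interior (homothetyImage (S k) cm (P k)) :=
    mem_interior_homothetyImage hcm0 (hS k)
  -- Step 1: for each i, a point q i on t in the closure of the i-th set that moves
  -- into the interior when translated by some positive multiple of v.
  have claim : ∀ i, ∃ q, q ∈ t ∧ ∃ ε > (0:ℝ),
      q ∈ closure (homothetyImage (S i) cm (P i)) ∧
      q + ε • v ∈ interior (homothetyImage (S i) cm (P i)) := by
    intro i
    by_cases hik : i = k
    · subst hik
      refine ⟨p, hpt, 1, one_pos, subset_closure hpH, ?_⟩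
      have h1 : p + (1:ℝ) • v = S i := by rw [hv]; module
      rw [h1]; exact hSkInt
    · obtain ⟨x, hxt, hxint⟩ := hother i hik
      have hcont : Continuous (fun ε : ℝ => x + ε • v) :=
        continuous_const.add (continuous_id.smul continuous_const)
      have hmem : (fun ε : ℝ => x + ε • v) ⁻¹' interior (homothetyImage (S i) cm (P i))
          ∈ nhds (0:ℝ) := by
        apply hcont.continuousAt.preimage_mem_nhds
        have : x + (0:ℝ) • v = x := by simp
        rw [this]
        exact isOpen_interior.mem_nhds hxint
      obtain ⟨δ, hδ0, hball⟩ := Metric.mem_nhds_iff.mp hmem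
      refine ⟨x, hxt, δ/2, by positivity, subset_closure (interior_subset hxint), ?_⟩
      apply hball
      simp only [Metric.mem_ball, Real.dist_eq, sub_zero]
      rw [abs_of_pos (by positivity)]
      linarith
  choose q hqt ε hε hqcl hqint using claim
  have hne : (Finset.univ : Finset (Fin m)).Nonempty := ⟨k, Finset.mem_univ k⟩
  set εm : ℝ := Finset.univ.inf' hne ε with hεm
  have hεm0 : 0 < εm := by
    rw [hεm, Finset.lt_inf'_iff]
    intro i _
    exact hε i
  have hεmle : ∀ i, εm ≤ ε i := fun i => Finset.inf'_le _ (Finset.mem_univ i)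
  set z : Fin m → EuclideanSpace ℝ (Fin 2) := fun i => q i + εm • v with hz
  have hzint : ∀ i, z i ∈ interior (homothetyImage (S i) cm (P i)) := by
    intro i
    have hconvH : Convex ℝ (homothetyImage (S i) cm (P i)) :=
      convex_homothetyImage _ _ (hconv i)
    have ha : 0 < εm / ε i := div_pos hεm0 (hε i)
    have hb : 0 ≤ 1 - εm / ε i := by
      have := (div_le_one (hε i)).mpr (hεmle i)
      linarith
    have key := hconvH.combo_interior_closure_mem_interior (hqint i) (hqcl i) ha hb
      (by ring)
    have heq : (εm / ε i) • (q i + ε i • v) + (1 - εm / ε i) • q i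
        = q i + ((εm / ε i) * ε i) • v := by module
    have h1 : εm / ε i * ε i = εm := div_mul_cancel₀ _ (hε i).ne'
    rw [heq, h1] at key
    exact key
  -- Step 2: shrink the ratio.
  have claim2 : ∀ i, ∃ δ > (0:ℝ), ∀ μ : ℝ, |μ - 1| < δ →
      S i + μ • (z i - S i) ∈ homothetyImage (S i) cm (P i) := by
    intro i
    have hcont : Continuous (fun μ : ℝ => S i + μ • (z i - S i)) :=
      continuous_const.add (continuous_id.smul continuous_const)
    have hmem : (fun μ : ℝ => S i + μ • (z i - S i)) ⁻¹'
        interior (homothetyImage (S i) cm (P i)) ∈ nhds (1:ℝ) := by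
      apply hcont.continuousAt.preimage_mem_nhds
      have h1 : S i + (1:ℝ) • (z i - S i) = z i := by module
      rw [h1]
      exact isOpen_interior.mem_nhds (hzint i)
    obtain ⟨δ, hδ0, hball⟩ := Metric.mem_nhds_iff.mp hmem
    refine ⟨δ, hδ0, fun μ hμ => ?_⟩
    have : μ ∈ Metric.ball (1:ℝ) δ := by
      simp only [Metric.mem_ball, Real.dist_eq]
      exact hμ
    exact interior_subset (hball this)
  choose δ hδ0 hδH using claim2
  set δm : ℝ := Finset.univ.inf' hne δ with hδm
  have hδm0 : 0 < δm := by
    rw [hδm, Finset.lt_inf'_iff]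
    intro i _
    exact hδ0 i
  have hδmle : ∀ i, δm ≤ δ i := fun i => Finset.inf'_le _ (Finset.mem_univ i)
  set μ : ℝ := 1 + δm / 2 with hμdef
  have hμ1 : 1 < μ := by rw [hμdef]; linarith
  have hμ0 : (0:ℝ) < μ := by linarith
  refine ⟨cm / μ, by positivity, div_lt_self hcm0 hμ1, εm • v, fun i => ?_⟩
  have hbound : |μ - 1| < δ i := by
    rw [hμdef]
    have : |(1 + δm / 2) - 1| = δm / 2 := by
      rw [abs_of_pos (by linarith)]
      ring
    rw [this]
    have := hδmle i
    linarith
  obtain ⟨y, hyP, hy⟩ := hδH i μ hbound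
  -- hy : S i + cm • (y - S i) = S i + μ • (z i - S i)
  refine ⟨z i, ⟨q i, hqt i, rfl⟩, y, hyP, ?_⟩
  -- goal : S i + (cm / μ) • (y - S i) = z i
  have h2 : cm • (y - S i) = μ • (z i - S i) := by
    have := hy
    simp only at this
    have h3 := congrArg (fun u => u - S i) this
    simpa using h3
  have h4 : (cm / μ) • (y - S i) = z i - S i := by
    have h5 := congrArg (fun u => μ⁻¹ • u) h2
    simp only [smul_smul, inv_mul_cancel₀ hμ0.ne', one_smul] at h5
    rw [div_eq_mul_inv, mul_comm]
    exact h5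
  show S i + (cm / μ) • (y - S i) = z i
  rw [h4]
  module
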